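/- Let Q ∈ ℝ[λ] be a nonzero real polynomial. Then there exists a complex polynomial A ∈ ℂ[λ] and a sign ε ∈ {1,-1} with Q(λ) = ε · A(λ) · conj(A)(λ) (where conj(A) has conjugated coefficients) if and only if every real root of Q has even multiplicity. -/

import Mathlib

open Polynomial Complex

private lemma aux_back : ∀ n : ℕ, ∀ Q : Polynomial ℝ, Q ≠ 0 → Q.natDegree ≤ n →
    (∀ x : ℝ, Even (rootMultiplicity x Q)) →
    ∃ (A : Polynomial ℂ) (ε : ℝ), (ε = 1 ∨ ε = -1) ∧
        Q.map (algebraMap ℝ ℂ) = C (ε : ℂ) * A * A.map (starRingEnd ℂ) := by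
  intro n
  induction n using Nat.strong_induction_on with
  | _ n ih =>
  intro Q hQ hdeg heven
  by_cases h0 : Q.natDegree = 0
  · obtain ⟨c, hc⟩ := natDegree_eq_zero.mp h0
    have hc0 : c ≠ 0 := by rintro rfl; simp at hc; exact hQ hc.symm
    by_cases hcs : 0 ≤ c
    · refine ⟨C ((Real.sqrt c : ℝ) : ℂ), 1, Or.inl rfl, ?_⟩
      have hs : Real.sqrt c * Real.sqrt c = c := Real.mul_self_sqrt hcs
      rw [← hc]
      simp only [Polynomial.map_C, map_C, Complex.conj_ofReal, Complex.coe_algebraMap]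
      rw [← map_mul, ← map_mul]
      congr 1
      push_cast
      rw [one_mul, ← Complex.ofReal_mul, hs]
    · refine ⟨C ((Real.sqrt (-c) : ℝ) : ℂ), -1, Or.inr rfl, ?_⟩
      have hs : Real.sqrt (-c) * Real.sqrt (-c) = -c := Real.mul_self_sqrt (by linarith)
      rw [← hc]
      simp only [Polynomial.map_C, map_C, Complex.conj_ofReal, Complex.coe_algebraMap]
      rw [← map_mul, ← map_mul]
      congr 1
      push_cast
      rw [show (-1 : ℂ) * (Real.sqrt (-c) : ℂ) * (Real.sqrt (-c) : ℂ)
          = -(((Real.sqrt (-c) * Real.sqrt (-c) : ℝ)) : ℂ) by push_cast; ring, hs]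
      push_cast
      ring
  · have hd : 0 < Q.natDegree := Nat.pos_of_ne_zero h0
    have hmap : Q.map (algebraMap ℝ ℂ) ≠ 0 :=
      (Polynomial.map_ne_zero_iff (algebraMap ℝ ℂ).injective).mpr hQ
    obtain ⟨z, hz⟩ := IsAlgClosed.exists_root (k := ℂ) (Q.map (algebraMap ℝ ℂ)) (by
      rw [degree_map_eq_of_injective (algebraMap ℝ ℂ).injective]
      intro h
      exact h0 (natDegree_eq_of_degree_eq_some h)
      )
    by_cases him : z.im = 0
    · -- real root
      set x := z.re with hx
      have hzx : z = (x : ℂ) := by apply Complex.ext <;> simp [him, hx]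
      have hroot : Q.IsRoot x := by
        have h1 : algebraMap ℝ ℂ (Q.eval x) = 0 := by
          rw [← eval₂_at_apply, ← eval_map]
          simp only [Complex.coe_algebraMap]
          rw [← hzx]; exact hz
        exact (_root_.map_eq_zero (algebraMap ℝ ℂ)).mp h1
      have h2le : 2 ≤ rootMultiplicity x Q := by
        have hpos := (rootMultiplicity_pos hQ).mpr hroot
        rcases heven x with ⟨k, hk⟩; omega
      obtain ⟨Q', hQ'eq⟩ : (X - C x) ^ 2 ∣ Q :=
        (pow_dvd_pow _ h2le).trans (pow_rootMultiplicity_dvd Q x)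
      have hne : (X - C x) ^ 2 * Q' ≠ 0 := hQ'eq ▸ hQ
      have hQ'0 : Q' ≠ 0 := right_ne_zero_of_mul hne
      have hrm : ∀ y : ℝ, rootMultiplicity y Q =
          rootMultiplicity y ((X - C x) ^ 2) + rootMultiplicity y Q' := by
        intro y; rw [hQ'eq]; exact rootMultiplicity_mul hne
      have heven' : ∀ y : ℝ, Even (rootMultiplicity y Q') := by
        intro y
        have h := heven y
        rw [hrm y] at h
        by_cases hyx : y = x
        · subst hyx; rw [rootMultiplicity_X_sub_C_pow] at h
          rcases h with ⟨k, hk⟩; exact ⟨k - 1, by omega⟩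
        · rwa [rootMultiplicity_eq_zero (by
            simp only [IsRoot, eval_pow, eval_sub, eval_X, eval_C]
            exact pow_ne_zero 2 (sub_ne_zero.mpr hyx)), zero_add] at h
      have hdeg' : Q'.natDegree + 2 = Q.natDegree := by
        rw [hQ'eq, natDegree_mul (pow_ne_zero 2 (X_sub_C_ne_zero x)) hQ'0,
          natDegree_pow, natDegree_X_sub_C]
        ring
      obtain ⟨A', ε, hε, hA'⟩ := ih Q'.natDegree (by omega) Q' hQ'0 le_rfl heven'
      refine ⟨(X - C (x : ℂ)) * A', ε, hε, ?_⟩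
      have e1 : ((X - C x) ^ 2 : Polynomial ℝ).map (algebraMap ℝ ℂ) = (X - C (x : ℂ)) ^ 2 := by
        simp
      have e2 : ((X - C (x : ℂ)) * A').map (starRingEnd ℂ) =
          (X - C (x : ℂ)) * A'.map (starRingEnd ℂ) := by
        simp [Polynomial.map_mul, Complex.conj_ofReal]
      rw [hQ'eq, Polynomial.map_mul, e1, hA', e2]
      ring
    · -- nonreal root
      have haev : aeval z Q = 0 := by rwa [aeval_def, ← eval_map]
      obtain ⟨Q', hQ'eq⟩ := Q.quadratic_dvd_of_aeval_eq_zero_im_ne_zero haev him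
      set q : Polynomial ℝ := X ^ 2 - C (2 * z.re) * X + C (‖z‖ ^ 2) with hqdef
      have hqmap : q.map (algebraMap ℝ ℂ) = (X - C ((starRingEnd ℂ) z)) * (X - C z) := by
        calc q.map (algebraMap ℝ ℂ)
            = X ^ 2 - C ((2 * z.re : ℝ) : ℂ) * X + C ((‖z‖ : ℂ) ^ 2) := by simp [hqdef]
          _ = (X - C ((starRingEnd ℂ) z)) * (X - C z) := by
              rw [← Complex.add_conj, map_add, ← Complex.mul_conj', map_mul]
              ring
      have hne : q * Q' ≠ 0 := hQ'eq ▸ hQ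
      have hq0 : q ≠ 0 := left_ne_zero_of_mul hne
      have hQ'0 : Q' ≠ 0 := right_ne_zero_of_mul hne
      have hqroot : ∀ y : ℝ, rootMultiplicity y q = 0 := by
        intro y
        apply rootMultiplicity_eq_zero
        intro h
        simp only [hqdef, IsRoot, eval_add, eval_sub, eval_mul, eval_pow, eval_X, eval_C] at h
        have hn : ‖z‖ ^ 2 = z.re * z.re + z.im * z.im := by
          simp [Complex.sq_norm, Complex.normSq_apply]
        have : z.im * z.im > 0 := mul_self_pos.mpr him
        nlinarith [sq_nonneg (y - z.re)]
      have heven' : ∀ y : ℝ, Even (rootMultiplicity y Q') := by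
        intro y
        have h := heven y
        rw [hQ'eq, rootMultiplicity_mul hne, hqroot y, zero_add] at h
        exact h
      have hqdeg : q.natDegree = 2 := by
        rw [hqdef]; compute_degree!
      have hdeg' : Q'.natDegree + 2 = Q.natDegree := by
        rw [hQ'eq, natDegree_mul hq0 hQ'0, hqdeg]; ring
      obtain ⟨A', ε, hε, hA'⟩ := ih Q'.natDegree (by omega) Q' hQ'0 le_rfl heven'
      refine ⟨(X - C z) * A', ε, hε, ?_⟩
      have e2 : ((X - C z) * A').map (starRingEnd ℂ) =
          (X - C ((starRingEnd ℂ) z)) * A'.map (starRingEnd ℂ) := by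
        simp [Polynomial.map_mul]
      rw [hQ'eq, Polynomial.map_mul, hqmap, hA', e2]
      ring

/-- A nonzero real polynomial `Q` factors as `Q = ε · A · conj(A)` with `A ∈ ℂ[λ]`
and `ε ∈ {1,-1}` if and only if every real root of `Q` has even multiplicity. -/
theorem factor_conj_pair_iff_even_real_multiplicity
    (Q : Polynomial ℝ) (hQ : Q ≠ 0) :
    (∃ (A : Polynomial ℂ) (ε : ℝ), (ε = 1 ∨ ε = -1) ∧
        Q.map (algebraMap ℝ ℂ) = C (ε : ℂ) * A * A.map (starRingEnd ℂ)) ↔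
    ∀ x : ℝ, Even (rootMultiplicity x Q) := by
  constructor
  · rintro ⟨A, ε, hε, hfac⟩ x
    have hεne : ((ε : ℝ) : ℂ) ≠ 0 := by rcases hε with rfl | rfl <;> norm_num
    have hmap : Q.map (algebraMap ℝ ℂ) ≠ 0 :=
      (Polynomial.map_ne_zero_iff (algebraMap ℝ ℂ).injective).mpr hQ
    have hne : C (ε : ℂ) * A * A.map (starRingEnd ℂ) ≠ 0 := hfac ▸ hmap
    have hA : A ≠ 0 := by
      rintro rfl; simp at hne
    rw [eq_rootMultiplicity_map (algebraMap ℝ ℂ).injective x, hfac,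
      rootMultiplicity_mul hne, rootMultiplicity_mul (left_ne_zero_of_mul hne)]
    simp only [Complex.coe_algebraMap]
    have h1 : rootMultiplicity ((x : ℝ) : ℂ) (C (ε : ℂ)) = 0 :=
      rootMultiplicity_eq_zero (by simp [IsRoot, hεne])
    have h2 : rootMultiplicity ((x : ℝ) : ℂ) (A.map (starRingEnd ℂ)) =
        rootMultiplicity ((x : ℝ) : ℂ) A := by
      have := eq_rootMultiplicity_map (p := A) (f := starRingEnd ℂ)
        (RingHom.injective _) ((x : ℝ) : ℂ)
      rw [Complex.conj_ofReal] at this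
      exact this.symm
    rw [h1, h2, zero_add]
    exact ⟨rootMultiplicity ((x : ℝ) : ℂ) A, rfl⟩
  · intro heven
    exact aux_back Q.natDegree Q hQ le_rfl heven
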